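/- Let φ1 and φ2 be strict generators (continuous, strictly decreasing functions φ_i : [0,1] → [0,∞] with φ_i(1) = 0 and lim_{s↓0} φ_i(s) = ∞). If there exists ε > 0 such that s ↦ φ1(s)/φ2(s) is increasing on (0, ε), then φ1 ∘ φ2^{−1} is subadditive near ∞, i.e. there exists M ≥ 0 such that (φ1∘φ2^{−1})(x+y) ≤ (φ1∘φ2^{−1})(x) + (φ1∘φ2^{−1})(y) for all x, y ≥ M. -/

import Mathlib

open Filter Set

/-- A `d`-copula: grounded, uniform margins, and `d`-increasing. -/
def IsCopula {d : ℕ} (C : (Fin d → ℝ) → ℝ) : Prop :=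
  (∀ u : Fin d → ℝ, (∀ k, u k ∈ Icc (0:ℝ) 1) → C u ∈ Icc (0:ℝ) 1) ∧
  (∀ u : Fin d → ℝ, (∀ k, u k ∈ Icc (0:ℝ) 1) → (∃ k, u k = 0) → C u = 0) ∧
  (∀ u : Fin d → ℝ, (∀ k, u k ∈ Icc (0:ℝ) 1) → ∀ k, (∀ l, l ≠ k → u l = 1) → C u = u k) ∧
  (∀ a b : Fin d → ℝ, (∀ k, 0 ≤ a k) → (∀ k, a k ≤ b k) → (∀ k, b k ≤ 1) →
    0 ≤ ∑ v : Fin d → Bool,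
      (-1 : ℝ) ^ (Finset.univ.filter fun k => v k = false).card *
        C (fun k => if v k then b k else a k))

/-- The tail dependence function `Λ(w; C) = lim_{s↓0} C(sw)/s` exists for all `w ∈ [0,∞)^d`
and equals `Λ`. -/
def HasTDF {d : ℕ} (C : (Fin d → ℝ) → ℝ) (Λ : (Fin d → ℝ) → ℝ) : Prop :=
  ∀ w : Fin d → ℝ, (∀ k, 0 ≤ w k) →
    Tendsto (fun s : ℝ => C (fun k => s * w k) / s) (nhdsWithin 0 (Ioi 0)) (nhds (Λ w))

/-- An Archimedean generator: continuous, strictly decreasing on `(0,1]` with `φ(1) = 0`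
(the value at `0` may be `∞`, i.e. `φ` may be unbounded near `0`). -/
def IsGenerator (φ : ℝ → ℝ) : Prop :=
  ContinuousOn φ (Ioc (0:ℝ) 1) ∧ StrictAntiOn φ (Ioc (0:ℝ) 1) ∧ φ 1 = 0

/-- A strict generator: `φ(s) → ∞` as `s ↓ 0`. -/
def IsStrictGenerator (φ : ℝ → ℝ) : Prop :=
  IsGenerator φ ∧ Tendsto φ (nhdsWithin 0 (Ioi 0)) atTop

/-- The generalized inverse `φ^{[-1]}(x) = inf {t ∈ (0,1] : φ(t) ≤ x}` (for a strict
generator this is the ordinary inverse of `φ : (0,1] → [0,∞)`). -/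
noncomputable def geninv (φ : ℝ → ℝ) (x : ℝ) : ℝ :=
  sInf {t | t ∈ Ioc (0:ℝ) 1 ∧ φ t ≤ x}

/-- `C` is the Archimedean `d`-copula generated by `φ`:
`C(u) = φ^{[-1]}(∑ₖ φ(uₖ))` on `(0,1]^d`, and `C(u) = 0` whenever some coordinate is `0`. -/
def IsArchimedean {d : ℕ} (C : (Fin d → ℝ) → ℝ) (φ : ℝ → ℝ) : Prop :=
  (∀ u : Fin d → ℝ, (∀ k, u k ∈ Ioc (0:ℝ) 1) → C u = geninv φ (∑ k, φ (u k))) ∧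
  (∀ u : Fin d → ℝ, (∀ k, u k ∈ Icc (0:ℝ) 1) → (∃ k, u k = 0) → C u = 0)

/-- `φ` is regularly varying at `0` with index `-α` (for `α ∈ [0,∞)`):
`φ(ts)/φ(s) → t^(-α)` as `s ↓ 0`, for every `t > 0`. -/
def RegVarAtZero (φ : ℝ → ℝ) (α : ℝ) : Prop :=
  ∀ t : ℝ, 0 < t →
    Tendsto (fun s : ℝ => φ (t * s) / φ s) (nhdsWithin 0 (Ioi 0)) (nhds (t ^ (-α)))

/-- `φ` is rapidly varying at `0` (index `-∞`): `φ(ts)/φ(s) → ∞` for `0 < t < 1` and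
`φ(ts)/φ(s) → 0` for `t > 1`, as `s ↓ 0`. -/
def RapidVarAtZero (φ : ℝ → ℝ) : Prop :=
  (∀ t : ℝ, 0 < t → t < 1 →
    Tendsto (fun s : ℝ => φ (t * s) / φ s) (nhdsWithin 0 (Ioi 0)) atTop) ∧
  (∀ t : ℝ, 1 < t →
    Tendsto (fun s : ℝ => φ (t * s) / φ s) (nhdsWithin 0 (Ioi 0)) (nhds 0))

/-- `φ` is regularly varying at `0` with index `-α` for the extended parameter
`α ∈ [0,∞]`. -/
def RegVarAtZeroE (φ : ℝ → ℝ) (α : ENNReal) : Prop :=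
  if α = ⊤ then RapidVarAtZero φ else RegVarAtZero φ α.toReal


lemma geninv_spec (φ : ℝ → ℝ) (hg : IsStrictGenerator φ) {x : ℝ} (hx : 0 ≤ x) :
    geninv φ x ∈ Ioc (0:ℝ) 1 ∧ φ (geninv φ x) = x := by
  obtain ⟨⟨hc, ha, h1⟩, htop⟩ := hg
  have h1' : (1:ℝ) ∈ Ioc (0:ℝ) 1 := ⟨one_pos, le_refl 1⟩
  -- find a ∈ (0,1) with x < φ a
  have hev : ∀ᶠ s in nhdsWithin (0:ℝ) (Ioi 0), x < φ s ∧ s ∈ Ioo (0:ℝ) 1 := by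
    filter_upwards [htop.eventually (eventually_gt_atTop x),
      Ioo_mem_nhdsGT_of_mem (by constructor <;> norm_num : (0:ℝ) ∈ Ico (0:ℝ) 1)]
      with s h1 h2
    exact ⟨h1, h2⟩
  obtain ⟨a, hax, ha01⟩ := hev.exists
  have haI : a ∈ Ioc (0:ℝ) 1 := ⟨ha01.1, ha01.2.le⟩
  have hsub : Icc a 1 ⊆ Ioc (0:ℝ) 1 := fun t ht => ⟨lt_of_lt_of_le ha01.1 ht.1, ht.2⟩
  have hcont : ContinuousOn φ (Icc a 1) := hc.mono hsub
  have hivt := intermediate_value_Icc' ha01.2.le hcont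
  have hxmem : x ∈ Icc (φ 1) (φ a) := ⟨by rw [h1]; exact hx, hax.le⟩
  obtain ⟨c, hcmem, hcx⟩ := hivt hxmem
  have hcI : c ∈ Ioc (0:ℝ) 1 := hsub hcmem
  have hcS : c ∈ {t | t ∈ Ioc (0:ℝ) 1 ∧ φ t ≤ x} := ⟨hcI, le_of_eq hcx⟩
  have hbdd : BddBelow {t | t ∈ Ioc (0:ℝ) 1 ∧ φ t ≤ x} :=
    ⟨0, fun t ht => ht.1.1.le⟩
  have hge : geninv φ x = c := by
    apply le_antisymm (csInf_le hbdd hcS)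
    apply le_csInf ⟨c, hcS⟩
    intro t ht
    by_contra hlt
    push_neg at hlt
    have := ha ht.1 hcI hlt
    rw [hcx] at this
    exact absurd ht.2 (not_le.mpr this)
  rw [hge]
  exact ⟨hcI, hcx⟩

/-- If `φ1(s)/φ2(s)` is increasing on some `(0, ε)`, then `φ1 ∘ φ2⁻¹` is
subadditive near `∞`. -/
theorem stmt18 (φ1 φ2 : ℝ → ℝ)
    (hg1 : IsStrictGenerator φ1) (hg2 : IsStrictGenerator φ2)
    (hmono : ∃ ε : ℝ, 0 < ε ∧ MonotoneOn (fun s => φ1 s / φ2 s) (Ioo (0:ℝ) ε)) :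
    ∃ M : ℝ, 0 ≤ M ∧ ∀ x y : ℝ, M ≤ x → M ≤ y →
      φ1 (geninv φ2 (x + y)) ≤ φ1 (geninv φ2 x) + φ1 (geninv φ2 y) := by
  obtain ⟨ε, hε, hmono⟩ := hmono
  obtain ⟨⟨hc2, ha2, h12⟩, htop2⟩ := hg2
  set s0 : ℝ := min (ε/2) (1/2) with hs0
  have hs0pos : 0 < s0 := lt_min (by linarith) (by norm_num)
  have hs0lt1 : s0 < 1 := lt_of_le_of_lt (min_le_right _ _) (by norm_num)
  have hs0ltε : s0 < ε := lt_of_le_of_lt (min_le_left _ _) (by linarith)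
  have hs0I : s0 ∈ Ioc (0:ℝ) 1 := ⟨hs0pos, hs0lt1.le⟩
  have h1I : (1:ℝ) ∈ Ioc (0:ℝ) 1 := ⟨one_pos, le_refl 1⟩
  have hMpos : 0 < φ2 s0 := by
    have := ha2 hs0I h1I hs0lt1
    rw [h12] at this; linarith
  refine ⟨φ2 s0, hMpos.le, ?_⟩
  intro x y hx hy
  have hx0 : 0 < x := lt_of_lt_of_le hMpos hx
  have hy0 : 0 < y := lt_of_lt_of_le hMpos hy
  obtain ⟨huI, hu⟩ := geninv_spec φ2 ⟨⟨hc2, ha2, h12⟩, htop2⟩ hx0.le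
  obtain ⟨hvI, hv⟩ := geninv_spec φ2 ⟨⟨hc2, ha2, h12⟩, htop2⟩ hy0.le
  obtain ⟨htI, ht⟩ := geninv_spec φ2 ⟨⟨hc2, ha2, h12⟩, htop2⟩ (by linarith : (0:ℝ) ≤ x + y)
  set u := geninv φ2 x
  set v := geninv φ2 y
  set t := geninv φ2 (x + y)
  -- from strict antitonicity: φ2 r ≥ φ2 r' implies r ≤ r'
  have key : ∀ r r' : ℝ, r ∈ Ioc (0:ℝ) 1 → r' ∈ Ioc (0:ℝ) 1 → φ2 r' ≤ φ2 r → r ≤ r' := by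
    intro r r' hr hr' hle
    by_contra h
    push_neg at h
    exact absurd hle (not_le.mpr (ha2 hr' hr h))
  have hus0 : u ≤ s0 := key u s0 huI hs0I (by rw [hu]; exact hx)
  have hvs0 : v ≤ s0 := key v s0 hvI hs0I (by rw [hv]; exact hy)
  have hts0 : t ≤ s0 := key t s0 htI hs0I (by rw [ht]; linarith)
  have htu : t ≤ u := key t u htI huI (by rw [ht, hu]; linarith)
  have htv : t ≤ v := key t v htI hvI (by rw [ht, hv]; linarith)
  have huE : u ∈ Ioo (0:ℝ) ε := ⟨huI.1, lt_of_le_of_lt hus0 hs0ltε⟩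
  have hvE : v ∈ Ioo (0:ℝ) ε := ⟨hvI.1, lt_of_le_of_lt hvs0 hs0ltε⟩
  have htE : t ∈ Ioo (0:ℝ) ε := ⟨htI.1, lt_of_le_of_lt hts0 hs0ltε⟩
  have hru : φ1 t / φ2 t ≤ φ1 u / φ2 u := hmono htE huE htu
  have hrv : φ1 t / φ2 t ≤ φ1 v / φ2 v := hmono htE hvE htv
  have hφ2u : φ2 u = x := hu
  have hφ2v : φ2 v = y := hv
  have hφ2t : φ2 t = x + y := ht
  have h1 : φ1 t = (φ1 t / φ2 t) * x + (φ1 t / φ2 t) * y := by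
    field_simp [hφ2t]
    rw [hφ2t, mul_div_cancel_right₀ _ (ne_of_gt (by linarith : (0:ℝ) < x + y))]
  have h2 : (φ1 t / φ2 t) * x ≤ φ1 u := by
    calc (φ1 t / φ2 t) * x ≤ (φ1 u / φ2 u) * x :=
          mul_le_mul_of_nonneg_right hru hx0.le
      _ = φ1 u := by rw [← hφ2u]; exact div_mul_cancel₀ _ (by rw [hφ2u]; exact hx0.ne')
  have h3 : (φ1 t / φ2 t) * y ≤ φ1 v := by
    calc (φ1 t / φ2 t) * y ≤ (φ1 v / φ2 v) * y :=
          mul_le_mul_of_nonneg_right hrv hy0.le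
      _ = φ1 v := by rw [← hφ2v]; exact div_mul_cancel₀ _ (by rw [hφ2v]; exact hy0.ne')
  linarith [h1, h2, h3]
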